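/- arXiv:1411.4976 — 9 statements merged into one kernel-verified Lean document; each statement's English description precedes it below -/
import Mathlib

section
/- Let (H₁, Γ, s₁) and (H₂, Γ, s₂) be two cut-and-project schemes on ℝ^d with the same structure group Γ. Suppose θ : H₁ → H₂ is a continuous group homomorphism such that s₂ = θ ∘ s₁ on Γ. Then θ is surjective and is an open map. -/
open scoped Pointwise

noncomputable section

/-- Euclidean space `ℝ^d`. -/
abbrev Euc (d : ℕ) := EuclideanSpace ℝ (Fin d)

/-- The graph `{(s(γ), γ) : γ ∈ Γ}` of the `*`-map of a cut-and-project
scheme, as a subgroup of `H × ℝ^d`. -/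
def graphHom {d : ℕ} {H : Type*} [AddCommGroup H]
    {Γ : AddSubgroup (Euc d)} (s : Γ →+ H) : AddSubgroup (H × Euc d) :=
  (s.prod Γ.subtype).range

/-- `(H, Γ, s)` is a cut-and-project scheme on `ℝ^d`: `s : Γ →+ H` has dense
range, and its graph is a lattice (discrete and cocompact subgroup) of
`H × ℝ^d`.  (The ambient hypotheses that `H` is a locally compact, σ-compact,
Hausdorff abelian topological group and `Γ` countable are carried as
typeclass assumptions.) -/
structure IsCPS (d : ℕ) (H : Type*) [AddCommGroup H] [TopologicalSpace H]
    (Γ : AddSubgroup (Euc d)) (s : Γ →+ H) : Prop where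
  denseRange : DenseRange s
  discreteGraph : DiscreteTopology (graphHom s)
  cocompactGraph : CompactSpace ((H × Euc d) ⧸ graphHom s)

/-- A continuous group morphism between the internal spaces of two CPS with
the same structure group, intertwining the `*`-maps, is onto and open. -/
theorem cps_morphism_surjective_and_open (d : ℕ) (H₁ H₂ : Type*)
    [AddCommGroup H₁] [TopologicalSpace H₁] [IsTopologicalAddGroup H₁]
    [LocallyCompactSpace H₁] [SigmaCompactSpace H₁] [T2Space H₁]
    [AddCommGroup H₂] [TopologicalSpace H₂] [IsTopologicalAddGroup H₂]
    [LocallyCompactSpace H₂] [SigmaCompactSpace H₂] [T2Space H₂]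
    (Γ : AddSubgroup (Euc d)) [Countable Γ]
    (s₁ : Γ →+ H₁) (s₂ : Γ →+ H₂)
    (h₁ : IsCPS d H₁ Γ s₁) (h₂ : IsCPS d H₂ Γ s₂)
    (θ : H₁ →+ H₂) (hθ : Continuous θ) (hcomm : ∀ γ : Γ, s₂ γ = θ (s₁ γ)) :
    Function.Surjective θ ∧ IsOpenMap θ := by
  -- the product map Θ = θ × id
  set Θ : (H₁ × Euc d) →+ (H₂ × Euc d) := θ.prodMap (AddMonoidHom.id _) with hΘ
  have hΘcont : Continuous Θ := hθ.prodMap continuous_id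
  -- Θ maps the first graph into the second
  have hmap : graphHom s₁ ≤ (graphHom s₂).comap Θ := by
    rintro x ⟨γ, rfl⟩
    exact ⟨γ, by simp [hΘ, hcomm γ]⟩
  haveI := h₁.cocompactGraph
  haveI := h₂.discreteGraph
  -- the second graph is closed, so the second quotient is T2
  haveI : IsClosed ((graphHom s₂ : AddSubgroup (H₂ × Euc d)) : Set (H₂ × Euc d)) := by
    letI : UniformSpace (H₂ × Euc d) := IsTopologicalAddGroup.rightUniformSpace _
    haveI : IsUniformAddGroup (H₂ × Euc d) := isUniformAddGroup_of_addCommGroup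
    exact AddSubgroup.isClosed_of_discrete
  -- induced map between the compact quotients
  set φ : ((H₁ × Euc d) ⧸ graphHom s₁) →+ ((H₂ × Euc d) ⧸ graphHom s₂) :=
    QuotientAddGroup.map _ _ Θ hmap with hφ
  have hφmk : ∀ x : H₁ × Euc d, φ (QuotientAddGroup.mk x) = QuotientAddGroup.mk (Θ x) :=
    fun x => QuotientAddGroup.map_mk _ _ _ hmap x
  have hφcont : Continuous φ := by
    refine (QuotientAddGroup.isQuotientMap_mk (graphHom s₁)).continuous_iff.mpr ?_
    have : (⇑φ ∘ QuotientAddGroup.mk : (H₁ × Euc d) → _) = (QuotientAddGroup.mk ∘ ⇑Θ) :=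
      funext hφmk
    rw [this]
    exact continuous_quot_mk.comp hΘcont
  -- θ has dense range
  have hθdense : DenseRange θ := by
    have hsub : Set.range (s₂ : Γ → H₂) ⊆ Set.range θ := by
      rintro x ⟨γ, rfl⟩; exact ⟨s₁ γ, (hcomm γ).symm⟩
    exact Dense.mono (Set.range_subset_iff.2 fun γ => hsub ⟨γ, rfl⟩ : _) h₂.denseRange
  -- Θ has dense range
  have hΘdense : DenseRange Θ := by
    have : Set.range Θ = Set.range θ ×ˢ Set.range (id : Euc d → Euc d) := by
      ext ⟨a, b⟩
      constructor
      · rintro ⟨⟨x, y⟩, h⟩; rw [← h]; exact ⟨⟨x, rfl⟩, ⟨y, rfl⟩⟩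
      · rintro ⟨⟨x, rfl⟩, -⟩; exact ⟨(x, b), rfl⟩
    rw [DenseRange, this]
    exact hθdense.prod denseRange_id
  -- range of φ is dense
  have hφdense : DenseRange φ := by
    have h1 : DenseRange (QuotientAddGroup.mk ∘ Θ :
        (H₁ × Euc d) → (H₂ × Euc d) ⧸ graphHom s₂) :=
      (QuotientAddGroup.mk_surjective.denseRange).comp hΘdense continuous_quot_mk
    have h2 : Set.range (QuotientAddGroup.mk ∘ Θ) ⊆ Set.range φ := by
      rintro x ⟨y, rfl⟩
      exact ⟨QuotientAddGroup.mk y, (hφmk y).symm ▸ rfl⟩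
    exact Dense.mono h2 h1
  -- range of φ is compact hence closed, hence φ is surjective
  have hφsurj : Function.Surjective φ := by
    have hcpt : IsCompact (Set.range φ) := isCompact_range hφcont
    have : Set.range φ = Set.univ := hφdense.closure_eq ▸ (hcpt.isClosed.closure_eq).symm
    exact Set.range_eq_univ.mp this
  -- surjectivity of θ
  have hsurj : Function.Surjective θ := by
    intro h
    obtain ⟨x, hx⟩ := hφsurj (QuotientAddGroup.mk (h, 0))
    obtain ⟨⟨a, u⟩, rfl⟩ := QuotientAddGroup.mk_surjective x
    rw [hφmk] at hx
    have : (h, (0 : Euc d)) - Θ (a, u) ∈ graphHom s₂ := by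
      rwa [← QuotientAddGroup.eq_iff_sub_mem, eq_comm]
    obtain ⟨γ, hγ⟩ := this
    have h1 : s₂ γ = h - θ a := congrArg Prod.fst hγ
    refine ⟨a + s₁ γ, ?_⟩
    rw [map_add, ← hcomm γ, h1]
    abel
  refine ⟨hsurj, ?_⟩
  exact θ.isOpenMap_of_sigmaCompact hsurj hθ
end
end

section
/- Let (H₁, Γ₁, s₁) and (H₂, Γ₂, s₂) be two cut-and-project schemes on ℝ^d with Γ₁ ⊆ Γ₂, and suppose θ : H₁ → H₂ is a continuous group homomorphism such that s₂(γ) = θ(s₁(γ)) for all γ ∈ Γ₁. Then θ is an open map and θ(H₁) is an open subgroup of H₂. -/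
open scoped Pointwise
open Topology

noncomputable section

/-- A continuous group morphism between the internal spaces of two CPS whose
structure groups satisfy `Γ₁ ⊆ Γ₂`, intertwining the `*`-maps on `Γ₁`, is an
open map and has open range. -/
theorem cps_morphism_open_and_open_range (d : ℕ) (H₁ H₂ : Type*)
    [AddCommGroup H₁] [TopologicalSpace H₁] [IsTopologicalAddGroup H₁]
    [LocallyCompactSpace H₁] [SigmaCompactSpace H₁] [T2Space H₁]
    [AddCommGroup H₂] [TopologicalSpace H₂] [IsTopologicalAddGroup H₂]
    [LocallyCompactSpace H₂] [SigmaCompactSpace H₂] [T2Space H₂]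
    (Γ₁ Γ₂ : AddSubgroup (Euc d)) [Countable Γ₁] [Countable Γ₂]
    (hle : Γ₁ ≤ Γ₂)
    (s₁ : Γ₁ →+ H₁) (s₂ : Γ₂ →+ H₂)
    (h₁ : IsCPS d H₁ Γ₁ s₁) (h₂ : IsCPS d H₂ Γ₂ s₂)
    (θ : H₁ →+ H₂) (hθ : Continuous θ)
    (hcomm : ∀ γ : Γ₁, s₂ (AddSubgroup.inclusion hle γ) = θ (s₁ γ)) :
    IsOpenMap θ ∧ IsOpen (θ.range : Set H₂) := by
  classical
  haveI := h₁.cocompactGraph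
  haveI := h₂.discreteGraph
  -- a uniform structure on `H₂` compatible with its topology
  letI : UniformSpace H₂ := IsTopologicalAddGroup.rightUniformSpace H₂
  haveI : IsUniformAddGroup H₂ := isUniformAddGroup_of_addCommGroup
  -- the product map `θ × id` between the ambient groups
  set Θ : H₁ × Euc d →+ H₂ × Euc d := θ.prodMap (AddMonoidHom.id (Euc d)) with hΘ
  have hΘcoe : ⇑Θ = Prod.map ⇑θ id := by
    ext p <;> rfl
  -- it maps the first lattice into the second one
  set f : (H₁ × Euc d) →+ (H₂ × Euc d) ⧸ graphHom s₂ :=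
    (QuotientAddGroup.mk' (graphHom s₂)).comp Θ with hf
  have hker : graphHom s₁ ≤ f.ker := by
    rintro x ⟨γ, rfl⟩
    have : Θ ((s₁.prod Γ₁.subtype) γ) ∈ graphHom s₂ := by
      refine ⟨AddSubgroup.inclusion hle γ, ?_⟩
      have h1 : ((AddSubgroup.inclusion hle γ : Γ₂) : Euc d) = (γ : Euc d) := rfl
      simp only [AddMonoidHom.prod_apply, AddSubgroup.coe_subtype, hΘcoe, Prod.map_apply, id_eq]
      exact Prod.ext (hcomm γ) h1
    simpa [f, AddMonoidHom.mem_ker, QuotientAddGroup.eq_zero_iff] using this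
  set g : ((H₁ × Euc d) ⧸ graphHom s₁) →+ (H₂ × Euc d) ⧸ graphHom s₂ :=
    QuotientAddGroup.lift (graphHom s₁) f hker with hg
  have hf_cont : Continuous f := by
    have : Continuous Θ := by rw [hΘcoe]; exact hθ.prodMap continuous_id
    exact continuous_quot_mk.comp this
  have hg_cont : Continuous g := by
    rw [(QuotientAddGroup.isQuotientMap_mk (graphHom s₁)).continuous_iff]
    exact hf_cont
  -- the range of `g` is compact, hence closed
  have hC : IsCompact (Set.range g) := isCompact_range hg_cont
  haveI : IsClosed ((graphHom s₂ : AddSubgroup (H₂ × Euc d)) : Set (H₂ × Euc d)) :=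
    AddSubgroup.isClosed_of_discrete
  have hCclosed : IsClosed (Set.range g) := hC.isClosed
  -- its preimage in `H₂ × ℝ^d` is a closed subgroup
  set Dsub : AddSubgroup (H₂ × Euc d) :=
    g.range.comap (QuotientAddGroup.mk' (graphHom s₂)) with hD
  have hDclosed : IsClosed (Dsub : Set (H₂ × Euc d)) := by
    have : (Dsub : Set (H₂ × Euc d)) =
        (QuotientAddGroup.mk' (graphHom s₂)) ⁻¹' (Set.range g) := rfl
    rw [this]
    exact hCclosed.preimage continuous_quot_mk
  -- the slice at second coordinate `0`
  set S : AddSubgroup H₂ := Dsub.comap (AddMonoidHom.inl H₂ (Euc d)) with hSdef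
  have hS_closed : IsClosed (S : Set H₂) := by
    have : (S : Set H₂) = (fun h : H₂ => (h, (0 : Euc d))) ⁻¹' (Dsub : Set (H₂ × Euc d)) := rfl
    rw [this]
    exact hDclosed.preimage (continuous_id.prodMk continuous_const)
  -- basic membership facts in `Dsub`
  have hmemΘ : ∀ p : H₁ × Euc d, Θ p ∈ Dsub := by
    intro p
    exact ⟨QuotientAddGroup.mk p, rfl⟩
  have hmemΛ : ∀ x ∈ graphHom s₂, x ∈ Dsub := by
    intro x hx
    have : (QuotientAddGroup.mk' (graphHom s₂)) x = 0 := (QuotientAddGroup.eq_zero_iff x).2 hx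
    exact ⟨0, by simpa [map_zero] using this.symm⟩
  have hs₂S : ∀ γ : Γ₂, s₂ γ ∈ S := by
    intro γ
    have hx : ((s₂ γ, (γ : Euc d)) : H₂ × Euc d) ∈ Dsub :=
      hmemΛ _ ⟨γ, rfl⟩
    have hy : ((0, (γ : Euc d)) : H₂ × Euc d) ∈ Dsub := by
      have := hmemΘ (0, (γ : Euc d))
      simpa [hΘcoe] using this
    have := Dsub.sub_mem hx hy
    exact (by simpa using this : ((s₂ γ, (0 : Euc d)) : H₂ × Euc d) ∈ Dsub)
  -- `S` is closed and contains the dense range of `s₂`, hence `S = H₂`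
  have hSuniv : ∀ h : H₂, h ∈ S := by
    intro h
    have hsub : Set.range ⇑s₂ ⊆ (S : Set H₂) := by
      rintro _ ⟨γ, rfl⟩; exact hs₂S γ
    have : h ∈ closure (Set.range ⇑s₂) := h₂.denseRange h
    have := closure_mono hsub this
    rwa [hS_closed.closure_eq] at this
  -- decomposition `H₂ = θ(H₁) + s₂(Γ₂)`
  have hcover : ∀ h : H₂, ∃ γ : Γ₂, ∃ a : H₁, h = s₂ γ + θ a := by
    intro h
    obtain ⟨q, hq⟩ := hSuniv h
    obtain ⟨p, rfl⟩ := QuotientAddGroup.mk_surjective q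
    have hq' : QuotientAddGroup.mk (Θ p) =
        (QuotientAddGroup.mk ((h, (0:Euc d))) : (H₂ × Euc d) ⧸ graphHom s₂) := hq
    rw [QuotientAddGroup.eq] at hq'
    obtain ⟨γ, hγ⟩ := hq'
    have h1 : (s₂ γ : H₂) = -(θ p.1) + h := congrArg Prod.fst hγ
    exact ⟨γ, p.1, by rw [h1]; abel⟩
  -- Baire category: some translate of a compact piece of `θ(H₁)` has interior
  obtain ⟨K, hKc, hKcover⟩ := SigmaCompactSpace.exists_compact_covering (X := H₁)
  haveI : Nonempty H₂ := ⟨0⟩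
  have hFc : ∀ i : Γ₂ × ℕ, IsClosed ((fun a : H₁ => s₂ i.1 + θ a) '' K i.2) := by
    intro i
    exact ((hKc i.2).image (continuous_const.add hθ)).isClosed
  have hFu : ⋃ i : Γ₂ × ℕ, (fun a : H₁ => s₂ i.1 + θ a) '' K i.2 = Set.univ := by
    apply Set.eq_univ_iff_forall.2
    intro h
    obtain ⟨γ, a, rfl⟩ := hcover h
    obtain ⟨n, hn⟩ : ∃ n, a ∈ K n := by
      have : a ∈ ⋃ n, K n := by rw [hKcover]; trivial
      simpa using this
    exact Set.mem_iUnion.2 ⟨(γ, n), ⟨a, hn, rfl⟩⟩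
  obtain ⟨⟨γ, n⟩, x, hx⟩ := nonempty_interior_of_iUnion_of_closed hFc hFu
  -- hence `θ.range` is open
  have hrange_open : IsOpen (θ.range : Set H₂) := by
    apply AddSubgroup.isOpen_of_mem_nhds θ.range (g := -(s₂ γ) + x)
    have h1 : (fun a : H₁ => s₂ γ + θ a) '' K n ∈ 𝓝 x := mem_interior_iff_mem_nhds.1 hx
    have h2 : Continuous fun t : H₂ => s₂ γ + t := continuous_const.add continuous_id
    have h3 : (fun t : H₂ => s₂ γ + t) ⁻¹' ((fun a : H₁ => s₂ γ + θ a) '' K n) ∈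
        𝓝 (-(s₂ γ) + x) := by
      apply h2.continuousAt.preimage_mem_nhds
      simpa [add_neg_cancel_left] using h1
    refine Filter.mem_of_superset h3 ?_
    rintro t ht
    obtain ⟨a, _, ha⟩ := ht
    exact ⟨a, add_left_cancel ha⟩
  refine ⟨?_, hrange_open⟩
  -- open mapping theorem onto the open range
  haveI : LocallyCompactSpace θ.range := hrange_open.locallyCompactSpace
  have hsurj : Function.Surjective θ.rangeRestrict := θ.rangeRestrict_surjective
  have hcont : Continuous θ.rangeRestrict := hθ.subtype_mk _
  have hmap : IsOpenMap θ.rangeRestrict :=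
    AddMonoidHom.isOpenMap_of_sigmaCompact θ.rangeRestrict hsurj hcont
  have hval : IsOpenMap (Subtype.val : θ.range → H₂) := hrange_open.isOpenMap_subtype_val
  have : ⇑θ = (Subtype.val : θ.range → H₂) ∘ ⇑θ.rangeRestrict := rfl
  rw [this]
  exact hval.comp hmap
end
end

section
/- Let (H₂, Γ₂, s₂) be a cut-and-project scheme on ℝ^d, let Γ be a subgroup of Γ₂, and let D ⊆ Γ be a subset that is relatively dense in ℝ^d and such that the closure of s₂(D) in H₂ is compact. Let H be the closure of s₂(Γ) in H₂ and let s : Γ → H be the restriction of s₂. Then (H, Γ, s) is a cut-and-project scheme; in particular the graph {(s(γ), γ) : γ ∈ Γ} is relatively dense in H × ℝ^d. -/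
open scoped Pointwise

noncomputable section

/-- Relative density of a subset of `ℝ^d`. -/
def RelativelyDense {d : ℕ} (D : Set (Euc d)) : Prop :=
  ∃ R > (0 : ℝ), ∀ x : Euc d, ∃ y ∈ D, dist x y ≤ R

/-- The closure of `s₂(Γ)` in `H₂`, for a subgroup `Γ ≤ Γ₂`. -/
def closureSub {d : ℕ} {H₂ : Type*} [AddCommGroup H₂] [TopologicalSpace H₂]
    [IsTopologicalAddGroup H₂] {Γ Γ₂ : AddSubgroup (Euc d)} (hle : Γ ≤ Γ₂)
    (s₂ : Γ₂ →+ H₂) : AddSubgroup H₂ :=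
  ((s₂.comp (AddSubgroup.inclusion hle)).range).topologicalClosure

/-- The restriction of `s₂` to `Γ`, viewed as a morphism into the closure of
`s₂(Γ)` in `H₂`. -/
def restrictHom {d : ℕ} {H₂ : Type*} [AddCommGroup H₂] [TopologicalSpace H₂]
    [IsTopologicalAddGroup H₂] {Γ Γ₂ : AddSubgroup (Euc d)} (hle : Γ ≤ Γ₂)
    (s₂ : Γ₂ →+ H₂) : Γ →+ closureSub hle s₂ :=
  (s₂.comp (AddSubgroup.inclusion hle)).codRestrict _
    (fun γ => AddSubgroup.le_topologicalClosure _ ⟨γ, rfl⟩)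

/-- Shrinking the structure group of a CPS: if `Γ ≤ Γ₂` contains a subset `D`
relatively dense in `ℝ^d` whose image under `s₂` has compact closure, then
restricting `s₂` to `Γ` and taking the closure `H` of `s₂(Γ)` in `H₂` again
yields a cut-and-project scheme; in particular the graph of the restricted
`*`-map is relatively dense in `H × ℝ^d`. -/
theorem shrunk_structure_group_is_cps (d : ℕ) (H₂ : Type*)
    [AddCommGroup H₂] [TopologicalSpace H₂] [IsTopologicalAddGroup H₂]
    [LocallyCompactSpace H₂] [SigmaCompactSpace H₂] [T2Space H₂]
    (Γ₂ : AddSubgroup (Euc d)) [Countable Γ₂] (s₂ : Γ₂ →+ H₂)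
    (h₂ : IsCPS d H₂ Γ₂ s₂)
    (Γ : AddSubgroup (Euc d)) (hle : Γ ≤ Γ₂)
    (D : Set (Euc d)) (hDΓ : D ⊆ (Γ : Set (Euc d))) (hDdense : RelativelyDense D)
    (hDcpt : IsCompact (closure (⇑s₂ '' {γ : Γ₂ | (γ : Euc d) ∈ D}))) :
    LocallyCompactSpace (closureSub hle s₂) ∧
    SigmaCompactSpace (closureSub hle s₂) ∧
    IsCPS d (closureSub hle s₂) Γ (restrictHom hle s₂) ∧
    ∃ K : Set (closureSub hle s₂ × Euc d), IsCompact K ∧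
      (graphHom (restrictHom hle s₂) : Set (closureSub hle s₂ × Euc d)) + K =
        Set.univ := by
  classical
  set H : AddSubgroup H₂ := closureSub hle s₂ with hHdef
  set s : Γ →+ H := restrictHom hle s₂ with hsdef
  have hHclosed : IsClosed (H : Set H₂) :=
    AddSubgroup.isClosed_topologicalClosure _
  haveI hLC : LocallyCompactSpace H :=
    hHclosed.isClosedEmbedding_subtypeVal.locallyCompactSpace
  haveI hSC : SigmaCompactSpace H := hHclosed.sigmaCompactSpace
  -- dense range
  have hdr : DenseRange s := by
    intro x
    rw [closure_subtype]
    have himg : Subtype.val '' Set.range s =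
        ((s₂.comp (AddSubgroup.inclusion hle)).range : Set H₂) := by
      ext y
      constructor
      · rintro ⟨z, ⟨γ, rfl⟩, rfl⟩
        exact ⟨γ, rfl⟩
      · rintro ⟨γ, rfl⟩
        exact ⟨s γ, ⟨γ, rfl⟩, rfl⟩
    rw [himg]
    exact x.2
  -- discreteness of the graph
  haveI hdisc : DiscreteTopology (graphHom s) := by
    haveI := h₂.discreteGraph
    have hF : Topology.IsEmbedding (fun p : H × Euc d => ((p.1 : H₂), p.2)) :=
      Topology.IsEmbedding.subtypeVal.prodMap Topology.IsEmbedding.id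
    have hFv : Topology.IsEmbedding (fun x : graphHom s => ((x.val.1 : H₂), x.val.2)) :=
      hF.comp Topology.IsEmbedding.subtypeVal
    have hmem : ∀ x : graphHom s,
        ((x.val.1 : H₂), x.val.2) ∈ (graphHom s₂ : Set (H₂ × Euc d)) := by
      rintro ⟨x, γ, rfl⟩
      exact ⟨AddSubgroup.inclusion hle γ, rfl⟩
    exact (hFv.codRestrict _ hmem).discreteTopology
  -- the compact set K
  obtain ⟨R, hR0, hRD⟩ := hDdense
  obtain ⟨V, hVcpt, hVnhds⟩ := exists_compact_mem_nhds (0 : H)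
  set Q : Set H₂ := closure (⇑s₂ '' {γ : Γ₂ | (γ : Euc d) ∈ D}) with hQdef
  have hQH : Q ⊆ (H : Set H₂) := by
    apply closure_minimal _ hHclosed
    rintro _ ⟨γ, hγ, rfl⟩
    exact AddSubgroup.le_topologicalClosure _
      ⟨⟨(γ : Euc d), hDΓ hγ⟩, by simp [AddSubgroup.inclusion]⟩
  set Q' : Set H := Subtype.val ⁻¹' Q with hQ'def
  have hQ'cpt : IsCompact Q' := by
    rw [Topology.IsEmbedding.subtypeVal.isCompact_iff]
    have : Subtype.val '' Q' = Q := by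
      rw [Set.image_preimage_eq_inter_range, Subtype.range_coe]
      exact Set.inter_eq_left.2 hQH
    rwa [this]
  set K : Set (H × Euc d) := (V + Q') ×ˢ Metric.closedBall 0 R with hKdef
  have hKcpt : IsCompact K := (hVcpt.add hQ'cpt).prod (isCompact_closedBall 0 R)
  -- the covering property
  have hcover : (graphHom s : Set (H × Euc d)) + K = Set.univ := by
    apply Set.eq_univ_of_forall
    rintro ⟨h, x⟩
    -- find γ with h - s γ ∈ V
    have hNnhds : {y : H | h - y ∈ V} ∈ nhds h := by
      have hc : Continuous fun y : H => h - y := continuous_const.sub continuous_id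
      have := hc.continuousAt (x := h)
      have h0 : h - h = 0 := sub_self h
      have := this.preimage_mem_nhds (by rw [h0]; exact hVnhds)
      exact this
    obtain ⟨y, hyN, γ, rfl⟩ := mem_closure_iff_nhds.1 (hdr h) _ hNnhds
    -- find δ ∈ D near γ - x
    obtain ⟨δ, hδD, hδd⟩ := hRD ((γ : Euc d) - x)
    set δ' : Γ := ⟨δ, hDΓ hδD⟩ with hδ'def
    have hsδ' : s δ' ∈ Q' := by
      show ((s δ' : H) : H₂) ∈ Q
      exact subset_closure ⟨AddSubgroup.inclusion hle δ', hδD, rfl⟩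
    refine Set.mem_add.2 ⟨(s (γ - δ'), ((γ - δ' : Γ) : Euc d)), ⟨γ - δ', rfl⟩,
      (h - s (γ - δ'), x - ((γ - δ' : Γ) : Euc d)), ⟨?_, ?_⟩, by rw [Prod.mk_add_mk, Prod.mk.injEq]; exact ⟨by abel, by abel⟩⟩
    · have : h - s (γ - δ') = (h - s γ) + s δ' := by
        rw [map_sub]; abel
      rw [this]
      exact Set.add_mem_add hyN hsδ'
    · rw [Metric.mem_closedBall, dist_zero_right]
      have : x - ((γ - δ' : Γ) : Euc d) = -(((γ : Euc d) - x) - δ) := by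
        push_cast [hδ'def]
        abel
      rw [this, norm_neg]
      rwa [dist_eq_norm] at hδd
  -- cocompactness
  have hcc : CompactSpace ((H × Euc d) ⧸ graphHom s) := by
    constructor
    have hsurj : Set.univ ⊆ (QuotientAddGroup.mk '' K :
        Set ((H × Euc d) ⧸ graphHom s)) := by
      rintro q -
      obtain ⟨z, rfl⟩ := QuotientAddGroup.mk_surjective q
      have hz : z ∈ (graphHom s : Set (H × Euc d)) + K := by
        rw [hcover]; trivial
      obtain ⟨g, hg, k, hk, rfl⟩ := Set.mem_add.1 hz
      refine ⟨k, hk, ?_⟩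
      have : ((g : (H × Euc d) ⧸ graphHom s)) = 0 :=
        (QuotientAddGroup.eq_zero_iff g).2 hg
      rw [QuotientAddGroup.mk_add, this, zero_add]
    exact Set.eq_univ_of_univ_subset hsurj ▸
      hKcpt.image QuotientAddGroup.continuous_mk
  exact ⟨hLC, hSC, ⟨hdr, hdisc, hcc⟩, K, hKcpt, hcover⟩
end
end

section
/- Let (H₁, Γ₁, s₁) and (H₂, Γ₂, s₂) be cut-and-project schemes on ℝ^d with Γ₁ ⊆ Γ₂, and suppose there is a continuous group homomorphism θ : H₁ → H₂ with s₂(γ) = θ(s₁(γ)) for all γ ∈ Γ₁. Then the triple (H₁ ⊕_{Γ₁} Γ₂, Γ₂, σ) is a cut-and-project scheme on ℝ^d: σ has dense range in H₁ ⊕_{Γ₁} Γ₂, and the graph {(σ(γ), γ) : γ ∈ Γ₂} is a discrete, relatively dense subgroup of (H₁ ⊕_{Γ₁} Γ₂) × ℝ^d. -/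
open scoped Pointwise

noncomputable section

/-- Type synonym endowing a type with the discrete topology. -/
def Disc (X : Type*) : Type _ := X

instance {X : Type*} [AddCommGroup X] : AddCommGroup (Disc X) := ‹AddCommGroup X›
instance {X : Type*} : TopologicalSpace (Disc X) := ⊥
instance {X : Type*} : DiscreteTopology (Disc X) := ⟨rfl⟩
instance {X : Type*} [AddCommGroup X] : IsTopologicalAddGroup (Disc X) where
  continuous_add := continuous_of_discreteTopology
  continuous_neg := continuous_of_discreteTopology

/-- The identity, as a morphism into the discrete copy. -/
def toDisc (X : Type*) [AddCommGroup X] : X →+ Disc X := AddMonoidHom.id X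

/-- The discrete subgroup `N = {(-s₁(γ), γ) : γ ∈ Γ₁}` of `H₁ × Γ₂`
(`Γ₂` discrete). -/
def NSub {d : ℕ} {H₁ : Type*} [AddCommGroup H₁] [TopologicalSpace H₁]
    {Γ₁ Γ₂ : AddSubgroup (Euc d)} (hle : Γ₁ ≤ Γ₂) (s₁ : Γ₁ →+ H₁) :
    AddSubgroup (H₁ × Disc Γ₂) :=
  ((-s₁).prod ((toDisc Γ₂).comp (AddSubgroup.inclusion hle))).range

/-- The group `H₁ ⊕_{Γ₁} Γ₂ := (H₁ × Γ₂) / N` with the quotient topology. -/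
abbrev DirSum {d : ℕ} {H₁ : Type*} [AddCommGroup H₁] [TopologicalSpace H₁]
    {Γ₁ Γ₂ : AddSubgroup (Euc d)} (hle : Γ₁ ≤ Γ₂) (s₁ : Γ₁ →+ H₁) :=
  (H₁ × Disc Γ₂) ⧸ NSub hle s₁

/-- The morphism `σ : Γ₂ →+ H₁ ⊕_{Γ₁} Γ₂`, `σ(γ) = [(0, γ)]_N`. -/
def sigmaHom {d : ℕ} {H₁ : Type*} [AddCommGroup H₁] [TopologicalSpace H₁]
    {Γ₁ Γ₂ : AddSubgroup (Euc d)} (hle : Γ₁ ≤ Γ₂) (s₁ : Γ₁ →+ H₁) :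
    Γ₂ →+ DirSum hle s₁ :=
  (QuotientAddGroup.mk' (NSub hle s₁)).comp
    ((AddMonoidHom.inr H₁ (Disc Γ₂)).comp (toDisc Γ₂))

/-- Auxiliary: a cocompact subgroup of a locally compact group is relatively
dense. -/
theorem exists_compact_add_eq_univ' {G : Type*} [AddCommGroup G] [TopologicalSpace G]
    [IsTopologicalAddGroup G] [LocallyCompactSpace G] (S : AddSubgroup G)
    (hc : CompactSpace (G ⧸ S)) :
    ∃ K : Set G, IsCompact K ∧ (S : Set G) + K = Set.univ := by
  have hopen : IsOpenMap ((↑) : G → G ⧸ S) := QuotientAddGroup.isOpenMap_coe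
  choose C hCcomp hCnhds using fun g : G => exists_compact_mem_nhds g
  have hcover : (Set.univ : Set (G ⧸ S)) ⊆
      ⋃ g : G, ((↑) : G → G ⧸ S) '' interior (C g) := by
    intro q _
    obtain ⟨g, rfl⟩ := QuotientAddGroup.mk_surjective q
    exact Set.mem_iUnion.2
      ⟨g, Set.mem_image_of_mem _ (mem_interior_iff_mem_nhds.2 (hCnhds g))⟩
  obtain ⟨t, ht⟩ := (isCompact_univ (X := G ⧸ S)).elim_finite_subcover
      (fun g : G => ((↑) : G → G ⧸ S) '' interior (C g))
      (fun g => hopen _ isOpen_interior) hcover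
  refine ⟨⋃ g ∈ t, C g, t.isCompact_biUnion (fun g _ => hCcomp g), ?_⟩
  apply Set.eq_univ_of_forall
  intro x
  have hx : (x : G ⧸ S) ∈ ⋃ g ∈ t, ((↑) : G → G ⧸ S) '' interior (C g) :=
    ht (Set.mem_univ _)
  simp only [Set.mem_iUnion, Set.mem_image] at hx
  obtain ⟨g, hg, y, hy, hxy⟩ := hx
  have hsub : x - y ∈ S := by
    rw [← QuotientAddGroup.eq_iff_sub_mem]
    exact hxy.symm
  exact ⟨x - y, hsub, y, Set.mem_biUnion hg (interior_subset hy), by simp⟩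

/-- Identity map out of the discrete copy. -/
def unDisc {X : Type*} (x : Disc X) : X := x

/-- Enlarging the structure group of a CPS: `(H₁ ⊕_{Γ₁} Γ₂, Γ₂, σ)` is again a
cut-and-project scheme: `σ` has dense range, and its graph is a discrete,
relatively dense subgroup of `(H₁ ⊕_{Γ₁} Γ₂) × ℝ^d`. -/
theorem dirsum_is_cps (d : ℕ) (H₁ H₂ : Type*)
    [AddCommGroup H₁] [TopologicalSpace H₁] [IsTopologicalAddGroup H₁]
    [LocallyCompactSpace H₁] [SigmaCompactSpace H₁] [T2Space H₁]
    [AddCommGroup H₂] [TopologicalSpace H₂] [IsTopologicalAddGroup H₂]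
    [LocallyCompactSpace H₂] [SigmaCompactSpace H₂] [T2Space H₂]
    (Γ₁ Γ₂ : AddSubgroup (Euc d)) [Countable Γ₁] [Countable Γ₂]
    (hle : Γ₁ ≤ Γ₂) (s₁ : Γ₁ →+ H₁) (s₂ : Γ₂ →+ H₂)
    (h₁ : IsCPS d H₁ Γ₁ s₁) (h₂ : IsCPS d H₂ Γ₂ s₂)
    (θ : H₁ →+ H₂) (hθ : Continuous θ)
    (hcomm : ∀ γ : Γ₁, s₂ (AddSubgroup.inclusion hle γ) = θ (s₁ γ)) :
    DenseRange (sigmaHom hle s₁) ∧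
    DiscreteTopology (graphHom (sigmaHom hle s₁)) ∧
    ∃ K : Set (DirSum hle s₁ × Euc d), IsCompact K ∧
      (graphHom (sigmaHom hle s₁) : Set (DirSum hle s₁ × Euc d)) + K =
        Set.univ := by
  classical
  have hπcont : Continuous (QuotientAddGroup.mk : H₁ × Disc Γ₂ → DirSum hle s₁) :=
    continuous_quot_mk
  have hπopen : IsOpenMap (QuotientAddGroup.mk : H₁ × Disc Γ₂ → DirSum hle s₁) :=
    QuotientAddGroup.isOpenMap_coe
  have hσ : ∀ γ : Γ₂, sigmaHom hle s₁ γ =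
      (QuotientAddGroup.mk ((0, γ) : H₁ × Disc Γ₂) : DirSum hle s₁) := fun γ => rfl
  have hmemN : ∀ δ : Γ₁,
      ((-(s₁ δ), AddSubgroup.inclusion hle δ) : H₁ × Disc Γ₂) ∈ NSub hle s₁ :=
    fun δ => ⟨δ, rfl⟩
  have hkey : ∀ δ : Γ₁,
      (QuotientAddGroup.mk ((s₁ δ, 0) : H₁ × Disc Γ₂) : DirSum hle s₁) =
        sigmaHom hle s₁ (AddSubgroup.inclusion hle δ) := by
    intro δ
    rw [hσ, QuotientAddGroup.eq_iff_sub_mem]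
    have : ((s₁ δ, 0) : H₁ × Disc Γ₂) - ((0, AddSubgroup.inclusion hle δ) : H₁ × Disc Γ₂)
        = (-(s₁ (-δ)), AddSubgroup.inclusion hle (-δ)) := by
      refine Prod.ext ?_ ?_
      · show s₁ δ - 0 = -(s₁ (-δ))
        rw [map_neg, neg_neg, sub_zero]
      · show (0 - AddSubgroup.inclusion hle δ : Γ₂) = AddSubgroup.inclusion hle (-δ)
        rw [map_neg, zero_sub]
    rw [this]
    exact hmemN (-δ)
  -- Part 1: dense range
  have hdense : DenseRange (sigmaHom hle s₁) := by
    have hcontf : Continuous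
        (fun h : H₁ => (QuotientAddGroup.mk ((h, 0) : H₁ × Disc Γ₂) : DirSum hle s₁)) :=
      hπcont.comp (continuous_id.prodMk continuous_const)
    have hrange_sub :
        (fun h : H₁ => (QuotientAddGroup.mk ((h, 0) : H₁ × Disc Γ₂) : DirSum hle s₁)) ''
          Set.range s₁ ⊆ Set.range (sigmaHom hle s₁) := by
      rintro _ ⟨_, ⟨δ, rfl⟩, rfl⟩
      exact ⟨AddSubgroup.inclusion hle δ, (hkey δ).symm⟩
    have hmemcl : ∀ h : H₁,
        (QuotientAddGroup.mk ((h, 0) : H₁ × Disc Γ₂) : DirSum hle s₁)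
          ∈ closure (Set.range (sigmaHom hle s₁)) := by
      intro h
      have h1 : h ∈ closure (Set.range s₁) := h₁.denseRange h
      have h2 := image_closure_subset_closure_image hcontf (Set.mem_image_of_mem _ h1)
      exact closure_mono hrange_sub h2
    intro x
    obtain ⟨⟨h, γ⟩, rfl⟩ := QuotientAddGroup.mk_surjective x
    have hsplit : (QuotientAddGroup.mk ((h, γ) : H₁ × Disc Γ₂) : DirSum hle s₁)
        = QuotientAddGroup.mk ((h, 0) : H₁ × Disc Γ₂) + sigmaHom hle s₁ γ := by
      rw [show sigmaHom hle s₁ γ = QuotientAddGroup.mk ((0, γ) : H₁ × Disc Γ₂) from rfl,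
        ← QuotientAddGroup.mk_add]
      congr 1
      simp [Prod.ext_iff]
    set T := (sigmaHom hle s₁).range.topologicalClosure with hT
    have hTcoe : (T : Set (DirSum hle s₁)) = closure (Set.range (sigmaHom hle s₁)) := by
      simp [hT, AddSubgroup.topologicalClosure_coe, AddMonoidHom.coe_range]
    rw [hsplit]
    have m1 : QuotientAddGroup.mk ((h, 0) : H₁ × Disc Γ₂) ∈ T := by
      rw [← SetLike.mem_coe, hTcoe]; exact hmemcl h
    have m2 : sigmaHom hle s₁ γ ∈ T :=
      (sigmaHom hle s₁).range.le_topologicalClosure ⟨γ, rfl⟩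
    have := T.add_mem m1 m2
    rwa [← SetLike.mem_coe, hTcoe] at this
  -- Part 2: discreteness of the graph
  have hdiscr : DiscreteTopology (graphHom (sigmaHom hle s₁)) := by
    rw [discreteTopology_iff_isOpen_singleton_zero]
    have h0 : IsOpen ({0} : Set (graphHom s₁)) := by
      have := h₁.discreteGraph
      exact isOpen_discrete _
    rw [isOpen_induced_iff] at h0
    obtain ⟨V, hV, hVpre⟩ := h0
    have hV0 : ((0 : H₁), (0 : Euc d)) ∈ V := by
      have h00 : (0 : graphHom s₁) ∈ (Subtype.val ⁻¹' V : Set (graphHom s₁)) := by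
        rw [hVpre]; rfl
      exact h00
    obtain ⟨U, B, hU, hB, hU0, hB0, hUB⟩ := isOpen_prod_iff.1 hV 0 0 hV0
    rw [isOpen_induced_iff]
    refine ⟨(QuotientAddGroup.mk '' (U ×ˢ ({0} : Set (Disc Γ₂)))) ×ˢ B,
      (hπopen _ (hU.prod (isOpen_discrete _))).prod hB, ?_⟩
    ext z
    simp only [Set.mem_preimage, Set.mem_singleton_iff]
    constructor
    · intro hz
      obtain ⟨γ, hγ⟩ := z.2
      rw [← hγ] at hz
      obtain ⟨hz1, hz2⟩ := hz
      obtain ⟨⟨u, w⟩, huw, hmk⟩ := hz1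
      have hw : w = 0 := huw.2
      subst hw
      have hmk' : ((u, (0 : Disc Γ₂)) : H₁ × Disc Γ₂) - ((0, γ) : H₁ × Disc Γ₂) ∈ NSub hle s₁ := by
        rw [← QuotientAddGroup.eq_iff_sub_mem]
        exact hmk
      obtain ⟨δ, hδeq⟩ := hmk'
      have hcomp1 : -(s₁ δ) = u := by
        have := congrArg Prod.fst hδeq
        simpa using this
      have hcomp2 : AddSubgroup.inclusion hle δ = -γ := by
        have := congrArg Prod.snd hδeq
        exact (show (AddSubgroup.inclusion hle δ : Γ₂) = 0 - γ from this).trans (zero_sub γ)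
      have hγ0 : γ = AddSubgroup.inclusion hle (-δ) := by
        rw [map_neg, hcomp2, neg_neg]
      have huU : s₁ (-δ) ∈ U := by rw [map_neg, hcomp1]; exact huw.1
      have hz2' : Γ₂.subtype γ ∈ B := hz2
      have hαB : (Γ₁.subtype (-δ) : Euc d) ∈ B := by
        rw [hγ0] at hz2'
        simpa using hz2'
      have hmemV : ((s₁ (-δ), Γ₁.subtype (-δ)) : H₁ × Euc d) ∈ V := hUB ⟨huU, hαB⟩
      have hval : (⟨(s₁ (-δ), Γ₁.subtype (-δ)), ⟨-δ, rfl⟩⟩ : graphHom s₁)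
          ∈ Subtype.val ⁻¹' V := hmemV
      rw [hVpre] at hval
      have hcoeeq : ((s₁ (-δ), Γ₁.subtype (-δ)) : H₁ × Euc d) = 0 :=
        congrArg Subtype.val hval
      have hα0 : (Γ₁.subtype (-δ) : Euc d) = 0 := congrArg Prod.snd hcoeeq
      have hδ0 : (-δ : Γ₁) = 0 := by
        have := Subtype.coe_injective (a₁ := -δ) (a₂ := (0 : Γ₁))
        exact this hα0
      have hγzero : γ = 0 := by rw [hγ0, hδ0, map_zero]
      apply Subtype.ext
      rw [← hγ, hγzero, map_zero]
      rfl
    · rintro rfl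
      constructor
      · exact ⟨((0 : H₁), (0 : Disc Γ₂)), ⟨hU0, rfl⟩, by simp; exact (NSub hle s₁).zero_mem⟩
      · exact hB0
  refine ⟨hdense, hdiscr, ?_⟩
  -- Part 3: relative denseness
  obtain ⟨K₁, hK₁c, hK₁⟩ := exists_compact_add_eq_univ' (graphHom s₁) h₁.cocompactGraph
  refine ⟨(fun p : H₁ × Euc d =>
      ((QuotientAddGroup.mk ((p.1, 0) : H₁ × Disc Γ₂) : DirSum hle s₁), p.2)) '' K₁,
    hK₁c.image ((hπcont.comp (continuous_fst.prodMk continuous_const)).prodMk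
      continuous_snd), ?_⟩
  apply Set.eq_univ_of_forall
  rintro ⟨q, x⟩
  obtain ⟨⟨h, γ⟩, rfl⟩ := QuotientAddGroup.mk_surjective q
  have hx : ((h, x - Γ₂.subtype (unDisc γ)) : H₁ × Euc d)
      ∈ (graphHom s₁ : Set (H₁ × Euc d)) + K₁ := by
    rw [hK₁]; trivial
  obtain ⟨a, ha, k, hk, hsum⟩ := hx
  obtain ⟨α, hα⟩ := ha
  rw [← hα] at hsum
  have hsum1 : s₁ α + k.1 = h := congrArg Prod.fst hsum
  have hsum2 : Γ₁.subtype α + k.2 = x - Γ₂.subtype (unDisc γ) := congrArg Prod.snd hsum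
  set δ : Γ₂ := unDisc γ + AddSubgroup.inclusion hle α with hδ
  refine ⟨(sigmaHom hle s₁ δ, Γ₂.subtype δ), ⟨δ, rfl⟩,
    ((QuotientAddGroup.mk ((k.1, 0) : H₁ × Disc Γ₂) : DirSum hle s₁), k.2),
    ⟨k, hk, rfl⟩, ?_⟩
  have hc1 : sigmaHom hle s₁ δ
      + (QuotientAddGroup.mk ((k.1, 0) : H₁ × Disc Γ₂) : DirSum hle s₁)
      = QuotientAddGroup.mk ((h, γ) : H₁ × Disc Γ₂) := by
    rw [hσ, ← QuotientAddGroup.mk_add, QuotientAddGroup.eq_iff_sub_mem]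
    have heq : ((0, δ) : H₁ × Disc Γ₂) + ((k.1, 0) : H₁ × Disc Γ₂) - ((h, γ) : H₁ × Disc Γ₂)
        = (-(s₁ α), AddSubgroup.inclusion hle α) := by
      change ((0 + k.1 - h, δ + 0 - unDisc γ) : H₁ × Γ₂)
        = ((-(s₁ α), AddSubgroup.inclusion hle α) : H₁ × Γ₂)
      rw [Prod.mk.injEq]
      constructor
      · rw [← hsum1]; abel
      · show (unDisc γ + AddSubgroup.inclusion hle α) + 0 - unDisc γ
            = AddSubgroup.inclusion hle α
        abel
    rw [heq]
    exact hmemN α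
  have hc2 : Γ₂.subtype δ + k.2 = x := by
    have hδc : Γ₂.subtype δ = Γ₂.subtype (unDisc γ) + Γ₁.subtype α := by
      rw [hδ, map_add]
      congr 1
    rw [hδc, add_assoc, hsum2]
    abel
  rw [Prod.ext_iff]
  exact ⟨hc1, hc2⟩
end
end

section
/- Let (H₁, Γ₁, s₁) be a cut-and-project scheme on ℝ^d and Γ₂ a countable subgroup of ℝ^d containing Γ₁. Then the graph {(σ(γ), γ) : γ ∈ Γ₂} is relatively dense in (H₁ ⊕_{Γ₁} Γ₂) × ℝ^d: if K ⊆ H₁ and K' ⊆ ℝ^d are compact sets with G(s₁) + K × K' = H₁ × ℝ^d, then {(σ(γ), γ) : γ ∈ Γ₂} + ([K × {0}]_N × K') = (H₁ ⊕_{Γ₁} Γ₂) × ℝ^d, where [K × {0}]_N denotes the image of K × {0} under the quotient map. -/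
open scoped Pointwise

noncomputable section

/-- The graph of `σ : Γ₂ →+ H₁ ⊕_{Γ₁} Γ₂` is relatively dense: if compact sets
`K ⊆ H₁`, `K' ⊆ ℝ^d` satisfy `G(s₁) + K × K' = H₁ × ℝ^d`, then
`G(σ) + [K × {0}]_N × K' = (H₁ ⊕_{Γ₁} Γ₂) × ℝ^d`. -/
theorem dirsum_graph_relatively_dense (d : ℕ) (H₁ : Type*)
    [AddCommGroup H₁] [TopologicalSpace H₁] [IsTopologicalAddGroup H₁]
    [LocallyCompactSpace H₁] [SigmaCompactSpace H₁] [T2Space H₁]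
    (Γ₁ Γ₂ : AddSubgroup (Euc d)) [Countable Γ₁] [Countable Γ₂]
    (hle : Γ₁ ≤ Γ₂) (s₁ : Γ₁ →+ H₁) (h₁ : IsCPS d H₁ Γ₁ s₁)
    (K : Set H₁) (K' : Set (Euc d)) (hK : IsCompact K) (hK' : IsCompact K')
    (hcover : (graphHom s₁ : Set (H₁ × Euc d)) + K ×ˢ K' = Set.univ) :
    (graphHom (sigmaHom hle s₁) : Set (DirSum hle s₁ × Euc d)) +
      ((⇑(QuotientAddGroup.mk' (NSub hle s₁)) ''
        (K ×ˢ ({0} : Set (Disc Γ₂)))) ×ˢ K') = Set.univ := by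
  rw [Set.eq_univ_iff_forall]
  rintro ⟨q, x⟩
  obtain ⟨⟨h, γ₂d⟩, rfl⟩ := QuotientAddGroup.mk'_surjective (NSub hle s₁) q
  obtain ⟨γ₂, hγ₂⟩ : ∃ g : Γ₂, γ₂d = (g : Disc Γ₂) := ⟨γ₂d, rfl⟩
  have hx : (h, x - (γ₂ : Euc d)) ∈ (graphHom s₁ : Set (H₁ × Euc d)) + K ×ˢ K' := by
    rw [hcover]; trivial
  rw [Set.mem_add] at hx
  obtain ⟨a, ha, ⟨k, k'⟩, ⟨hk, hk'⟩, hab⟩ := hx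
  obtain ⟨γ₁, rfl⟩ := ha
  have h1 : s₁ γ₁ + k = h := congrArg Prod.fst hab
  have h2 : (γ₁ : Euc d) + k' = x - (γ₂ : Euc d) := congrArg Prod.snd hab
  rw [Set.mem_add]
  set γ : Γ₂ := γ₂ + AddSubgroup.inclusion hle γ₁ with hγ
  refine ⟨(sigmaHom hle s₁ γ, ((γ₂ : Euc d) + (γ₁ : Euc d))), ?_,
      (QuotientAddGroup.mk' (NSub hle s₁) (k, (0 : Disc Γ₂)), k'),
      ⟨Set.mem_image_of_mem _ ⟨hk, rfl⟩, hk'⟩, ?_⟩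
  · refine ⟨γ, Prod.ext rfl ?_⟩
    simp [hγ, AddSubgroup.coe_add, AddSubgroup.coe_inclusion]
  · have hσ : sigmaHom hle s₁ γ = QuotientAddGroup.mk' (NSub hle s₁) ((0 : H₁), (γ : Disc Γ₂)) := rfl
    rw [hγ₂]
    refine Prod.ext ?_ ?_
    · show sigmaHom hle s₁ γ + QuotientAddGroup.mk' (NSub hle s₁) (k, (0 : Disc Γ₂)) = _
      rw [hσ, ← map_add, QuotientAddGroup.mk'_eq_mk']
      refine ⟨((-s₁).prod ((toDisc Γ₂).comp (AddSubgroup.inclusion hle))) (-γ₁), ⟨-γ₁, rfl⟩, ?_⟩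
      refine Prod.ext ?_ ?_
      · show 0 + k + (-s₁) (-γ₁) = h
        simp only [AddMonoidHom.neg_apply, map_neg, neg_neg, zero_add]
        rw [← h1]; abel
      · show γ + 0 + AddSubgroup.inclusion hle (-γ₁) = γ₂
        rw [hγ]
        simp only [map_neg, add_zero]
        abel
    · show (γ₂ : Euc d) + (γ₁ : Euc d) + k' = x
      rw [add_assoc, h2]
      abel
end
end

section
/- Let (H, Γ, s) be a cut-and-project scheme on ℝ^d, let R be a compact subgroup of H, and let π : H → H/R be the quotient homomorphism. Then (H/R, Γ, π ∘ s) is a cut-and-project scheme on ℝ^d: H/R is a locally compact, σ-compact, Hausdorff abelian topological group, π ∘ s has dense range in H/R, and the graph {((π ∘ s)(γ), γ) : γ ∈ Γ} is a discrete and cocompact subgroup of (H/R) × ℝ^d. -/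
open scoped Pointwise

noncomputable section

open Filter Set Topology

/-- A discrete subgroup of a Hausdorff topological additive group is closed. -/
theorem discrete_addSubgroup_isClosed {G : Type*} [AddCommGroup G] [TopologicalSpace G]
    [IsTopologicalAddGroup G] [T2Space G] (S : AddSubgroup G) [DiscreteTopology S] :
    IsClosed (S : Set G) := by
  obtain ⟨U, hU, hUS⟩ : ∃ U ∈ 𝓝 (0 : G), U ∩ (S : Set G) = {0} :=
    nhds_inter_eq_singleton_of_mem_discrete (isDiscrete_iff_discreteTopology.mpr ‹_›) S.zero_mem
  obtain ⟨V, hV, hVU⟩ := exists_nhds_half_neg hU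
  rw [isClosed_iff_nhds]
  intro x hx
  have hxV : (x + ·) '' V ∈ 𝓝 x := by
    rw [← map_add_left_nhds_zero x]; exact Filter.image_mem_map hV
  obtain ⟨s₀, hs₀⟩ := hx _ hxV
  have key : ∀ t ∈ ((x + ·) '' V) ∩ (S : Set G), t = s₀ := by
    rintro t ⟨⟨v, hv, rfl⟩, htS⟩
    obtain ⟨⟨w, hw, hws⟩, hs₀S⟩ := hs₀
    have hmem : (x + v) - s₀ ∈ U := by
      rw [← hws]
      have : (x + v) - (x + w) = v - w := by abel
      rw [this]; exact hVU v hv w hw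
    have hh : (x + v) - s₀ ∈ U ∩ (S : Set G) := ⟨hmem, sub_mem htS hs₀S⟩
    rw [hUS] at hh
    have := sub_eq_zero.mp (Set.mem_singleton_iff.mp hh)
    exact this
  have hxc : x ∈ closure ({s₀} : Set G) := by
    rw [mem_closure_iff_nhds]
    intro t ht
    obtain ⟨u, hu⟩ := hx _ (Filter.inter_mem ht hxV)
    exact ⟨u, hu.1.1, key u ⟨hu.1.2, hu.2⟩⟩
  rw [closure_singleton, Set.mem_singleton_iff] at hxc
  rw [hxc]
  exact hs₀.2

/-- Modding out a compact subgroup `R` of the internal space of a CPS yields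
again a CPS. -/
theorem quotient_by_compact_subgroup_is_cps (d : ℕ) (H : Type*)
    [AddCommGroup H] [TopologicalSpace H] [IsTopologicalAddGroup H]
    [LocallyCompactSpace H] [SigmaCompactSpace H] [T2Space H]
    (Γ : AddSubgroup (Euc d)) [Countable Γ] (s : Γ →+ H)
    (hCPS : IsCPS d H Γ s)
    (R : AddSubgroup H) (hR : IsCompact (R : Set H)) :
    LocallyCompactSpace (H ⧸ R) ∧ SigmaCompactSpace (H ⧸ R) ∧
    T2Space (H ⧸ R) ∧
    IsCPS d (H ⧸ R) Γ ((QuotientAddGroup.mk' R).comp s) := by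
  haveI hRcl : IsClosed (R : Set H) := hR.isClosed
  haveI := hCPS.discreteGraph
  haveI := hCPS.cocompactGraph
  -- notation
  set E := Euc d
  set s' : Γ →+ (H ⧸ R) := (QuotientAddGroup.mk' R).comp s with hs'def
  set φ : H × E →+ (H ⧸ R) × E :=
    (QuotientAddGroup.mk' R).prodMap (AddMonoidHom.id E) with hφdef
  have hφcoe : ∀ x : H × E, φ x = ((x.1 : H ⧸ R), x.2) := fun x => rfl
  have hφcont : Continuous φ :=
    ((continuous_quot_mk).comp continuous_fst).prodMk continuous_snd
  have hφoq : IsOpenQuotientMap (⇑φ) := by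
    have h1 : IsOpenQuotientMap (Prod.map (QuotientAddGroup.mk : H → H ⧸ R) (id : E → E)) :=
      (QuotientAddGroup.isOpenQuotientMap_mk).prodMap .id
    have : ⇑φ = Prod.map (QuotientAddGroup.mk : H → H ⧸ R) (id : E → E) := rfl
    rw [this]; exact h1
  have hgraph : graphHom s' = (graphHom s).map φ := by
    rw [graphHom, graphHom, ← AddMonoidHom.range_comp]
    congr 1
  -- membership in graphHom s with vanishing second coordinate forces zero
  have hmemG : ∀ x : H × E, x ∈ graphHom s → x.2 = 0 → x = 0 := by
    rintro x ⟨γ, rfl⟩ h2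
    have hγ : γ = 0 := Subtype.ext h2
    rw [hγ, map_zero]
  -- discreteness of the graph of s'
  have hGclosed : IsClosed ((graphHom s : AddSubgroup (H × E)) : Set (H × E)) :=
    discrete_addSubgroup_isClosed _
  obtain ⟨U, hU, hUG⟩ : ∃ U ∈ 𝓝 (0 : H × E), U ∩ (graphHom s : Set (H × E)) = {0} :=
    nhds_inter_eq_singleton_of_mem_discrete (isDiscrete_iff_discreteTopology.mpr ‹_›) (graphHom s).zero_mem
  obtain ⟨U', hU'sub, hU'open, hU'0⟩ := mem_nhds_iff.mp hU
  have h0U' : ∀ x : H × E, x ∈ graphHom s → x ∈ U' → x = 0 := by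
    intro x hx hxU
    have : x ∈ U ∩ (graphHom s : Set (H × E)) := ⟨hU'sub hxU, hx⟩
    rw [hUG] at this; exact this
  have hGd_closed : IsClosed ((graphHom s : Set (H × E)) \ {0}) := by
    have heq : (graphHom s : Set (H × E)) \ {0} = (graphHom s : Set (H × E)) ∩ U'ᶜ := by
      ext x
      constructor
      · rintro ⟨hxG, hx0⟩
        exact ⟨hxG, fun hxU => hx0 (h0U' x hxG hxU)⟩
      · rintro ⟨hxG, hxU⟩
        refine ⟨hxG, fun hx0 => hxU ?_⟩
        rw [Set.mem_singleton_iff] at hx0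
        rw [hx0]; exact hU'0
    rw [heq]
    exact hGclosed.inter hU'open.isClosed_compl
  set K : Set (H × E) := (R : Set H) ×ˢ ({0} : Set E) with hKdef
  have hKcomp : IsCompact K := hR.prod isCompact_singleton
  have hK0 : (0 : H × E) ∈ K := ⟨R.zero_mem, rfl⟩
  have hKadd : ∀ a b : H × E, a ∈ K → b ∈ K → a + b ∈ K := by
    rintro a b ⟨ha1, ha2⟩ ⟨hb1, hb2⟩
    refine ⟨add_mem ha1 hb1, ?_⟩
    simp only [Set.mem_singleton_iff] at *
    show a.2 + b.2 = 0
    rw [ha2, hb2, add_zero]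
  set C : Set (H × E) := ((graphHom s : Set (H × E)) \ {0}) + K with hCdef
  have hCclosed : IsClosed C := hGd_closed.add_right_of_isCompact hKcomp
  have hφker : ∀ x c : H × E, φ x = φ c → x - c ∈ K := by
    intro x c h
    have h1 : ((x.1 : H ⧸ R)) = (c.1 : H ⧸ R) := (Prod.ext_iff.mp h).1
    have h2 : x.2 = c.2 := (Prod.ext_iff.mp h).2
    refine ⟨?_, ?_⟩
    · have : -x.1 + c.1 ∈ R := (QuotientAddGroup.eq).mp h1
      have h' : -(-x.1 + c.1) ∈ R := neg_mem this
      simpa [neg_add_rev, sub_eq_add_neg, add_comm] using h'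
    · show x.2 - c.2 = 0
      rw [h2, sub_self]
  have hCsat : ∀ x c : H × E, c ∈ C → φ x = φ c → x ∈ C := by
    intro x c hc hxc
    obtain ⟨g, hg, k, hk, rfl⟩ := Set.mem_add.mp hc
    have hx' : x - (g + k) ∈ K := hφker x (g + k) hxc
    have : x = g + (k + (x - (g + k))) := by abel
    rw [this]
    exact Set.add_mem_add hg (hKadd _ _ hk hx')
  set V : Set ((H ⧸ R) × E) := (⇑φ '' C)ᶜ with hVdef
  have hVopen : IsOpen V := by
    rw [← hφoq.isQuotientMap.isOpen_preimage]
    have : ⇑φ ⁻¹' V = Cᶜ := by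
      rw [hVdef, Set.preimage_compl]
      congr 1
      apply Set.Subset.antisymm
      · rintro x ⟨c, hc, hcx⟩
        exact hCsat x c hc hcx.symm
      · exact Set.subset_preimage_image _ _
    rw [this]
    exact hCclosed.isOpen_compl
  have h0V : (0 : (H ⧸ R) × E) ∈ V := by
    rintro ⟨c, hc, hc0⟩
    obtain ⟨g, hg, k, hk, rfl⟩ := Set.mem_add.mp hc
    have hsnd : (g + k).2 = 0 := (Prod.ext_iff.mp hc0).2
    have hk2 : k.2 = 0 := hk.2
    have hg2 : g.2 = 0 := by
      have : g.2 + k.2 = 0 := hsnd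
      rw [hk2, add_zero] at this; exact this
    exact hg.2 (hmemG g hg.1 hg2)
  have hVG : ∀ y : (H ⧸ R) × E, y ∈ graphHom s' → y ∈ V → y = 0 := by
    intro y hy hyV
    rw [hgraph, AddSubgroup.mem_map] at hy
    obtain ⟨x, hxG, rfl⟩ := hy
    by_cases hx0 : x = 0
    · rw [hx0, map_zero]
    · exfalso
      apply hyV
      exact ⟨x, by { have : x = x + 0 := by rw [add_zero]
                     rw [this]; exact Set.add_mem_add ⟨hxG, hx0⟩ hK0 }, rfl⟩
  have hdisc : DiscreteTopology (graphHom s') := by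
    rw [discreteTopology_iff_isOpen_singleton_zero]
    have heq : ({0} : Set (graphHom s')) = Subtype.val ⁻¹' V := by
      ext y
      simp only [Set.mem_singleton_iff, Set.mem_preimage]
      constructor
      · rintro rfl; exact h0V
      · intro hyV
        exact Subtype.ext (hVG (y : (H ⧸ R) × E) y.2 hyV)
    rw [heq]
    exact hVopen.preimage continuous_subtype_val
  -- cocompactness
  have hle : graphHom s ≤ (graphHom s').comap φ := by
    intro x hx
    rw [AddSubgroup.mem_comap, hgraph]
    exact AddSubgroup.mem_map_of_mem φ hx
  set F : ((H × E) ⧸ graphHom s) → (((H ⧸ R) × E) ⧸ graphHom s') :=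
    ⇑(QuotientAddGroup.map (graphHom s) (graphHom s') φ hle) with hFdef
  have hFmk : ∀ x : H × E, F (QuotientAddGroup.mk x) = QuotientAddGroup.mk (φ x) := by
    intro x
    rfl
  have hFcont : Continuous F := by
    refine (QuotientAddGroup.isQuotientMap_mk (graphHom s)).continuous_iff.mpr ?_
    have : F ∘ (QuotientAddGroup.mk : H × E → (H × E) ⧸ graphHom s)
        = (QuotientAddGroup.mk : (H ⧸ R) × E → ((H ⧸ R) × E) ⧸ graphHom s') ∘ ⇑φ :=
      funext fun x => hFmk x
    rw [this]
    exact continuous_quot_mk.comp hφcont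
  have hFsurj : Function.Surjective F := by
    intro y
    obtain ⟨z, rfl⟩ := QuotientAddGroup.mk_surjective y
    obtain ⟨x, rfl⟩ := hφoq.surjective z
    exact ⟨QuotientAddGroup.mk x, hFmk x⟩
  have hcocompact : CompactSpace ((((H ⧸ R) × E)) ⧸ graphHom s') := by
    constructor
    rw [← Set.range_eq_univ.mpr hFsurj]
    exact isCompact_range hFcont
  -- dense range
  have hdense : DenseRange s' := by
    have h1 : DenseRange (QuotientAddGroup.mk : H → H ⧸ R) :=
      QuotientAddGroup.mk_surjective.denseRange
    have h2 : DenseRange ((QuotientAddGroup.mk : H → H ⧸ R) ∘ ⇑s) :=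
      h1.comp hCPS.denseRange continuous_quot_mk
    exact h2
  -- σ-compactness of the quotient
  have hsigma : SigmaCompactSpace (H ⧸ R) := by
    constructor
    have h1 : IsSigmaCompact ((QuotientAddGroup.mk : H → H ⧸ R) '' Set.univ) :=
      (isSigmaCompact_univ (X := H)).image continuous_quot_mk
    rwa [Set.image_univ, QuotientAddGroup.mk_surjective.range_eq] at h1
  refine ⟨inferInstance, hsigma, inferInstance, hdense, hdisc, hcocompact⟩
end
end

section
/- Let H be a Hausdorff abelian topological group and (Vᵢ)_{i∈I} a nonempty family of nonempty compact subsets of H that is irredundant, i.e. the only w ∈ H with Vᵢ + w = Vᵢ for all i ∈ I is w = 0. Suppose (Aᵢ)_{i∈I} is a family of subsets of H and w, w' ∈ H satisfy Aᵢ ⊆ Vᵢ + w and Vᵢ ⊆ Aᵢ + w' for all i ∈ I. Then w' = −w and Aᵢ = Vᵢ + w for all i ∈ I. -/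
open scoped Pointwise

/-- Rigidity for irredundant families of compact sets: if `(Vᵢ)` is an
irredundant nonempty family of nonempty compact subsets of a Hausdorff abelian
topological group, and `Aᵢ ⊆ Vᵢ + w`, `Vᵢ ⊆ Aᵢ + w'` for all `i`, then
`w' = -w` and `Aᵢ = Vᵢ + w` for all `i`. -/
theorem irredundant_translate_rigidity (H : Type*) [AddCommGroup H]
    [TopologicalSpace H] [IsTopologicalAddGroup H] [T2Space H]
    (I : Type*) [Nonempty I] (V A : I → Set H)
    (hne : ∀ i, (V i).Nonempty) (hcpt : ∀ i, IsCompact (V i))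
    (hirr : ∀ w : H, (∀ i, V i + ({w} : Set H) = V i) → w = 0)
    (w w' : H)
    (hA : ∀ i, A i ⊆ V i + ({w} : Set H))
    (hV : ∀ i, V i ⊆ A i + ({w'} : Set H)) :
    w' = -w ∧ ∀ i, A i = V i + ({w} : Set H) := by
  set t := w + w' with ht
  set s := -t with hs
  -- V i ⊆ V i + t, i.e. x + s ∈ V i for x ∈ V i
  have hstep : ∀ i, ∀ x ∈ V i, x + s ∈ V i := by
    intro i x hx
    have h1 : x + -w' ∈ A i := by simpa [Set.mem_add] using hV i hx
    have h2 : x + -w' + -w ∈ V i := by simpa [Set.mem_add] using hA i h1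
    have heq : x + -w' + -w = x + s := by rw [hs, ht]; abel
    rwa [heq] at h2
  have hns : ∀ i, ∀ x ∈ V i, ∀ n : ℕ, x + n • s ∈ V i := by
    intro i x hx n
    induction n with
    | zero => simpa using hx
    | succ n ih =>
      have := hstep i _ ih
      rw [succ_nsmul, ← add_assoc]
      exact this
  -- cluster point argument
  obtain ⟨i₀⟩ := ‹Nonempty I›
  obtain ⟨x₀, hx₀⟩ := hne i₀
  set f : Filter H := Filter.map (fun n : ℕ => x₀ + n • s) Filter.atTop with hf
  have hle : f ≤ Filter.principal (V i₀) := by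
    rw [hf, Filter.le_principal_iff, Filter.mem_map]
    exact Filter.Eventually.of_forall fun n => hns i₀ x₀ hx₀ n
  have hnb : f.NeBot := Filter.map_neBot
  obtain ⟨x, hxV, hx⟩ := hcpt i₀ hle
  have hfreq : ∀ W ∈ nhds x, ∃ᶠ n in Filter.atTop, x₀ + n • s ∈ W :=
    mapClusterPt_iff_frequently.mp hx
  have small : ∀ U ∈ nhds (0 : H), ∃ k : ℕ, 2 ≤ k ∧ k • s ∈ U := by
    intro U hU
    have hts : Filter.Tendsto (fun p : H × H => p.1 - p.2) (nhds (x, x)) (nhds 0) := by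
      have := (continuous_sub : Continuous fun p : H × H => p.1 - p.2).tendsto (x, x)
      simpa using this
    have hU' := hts hU
    rw [Filter.mem_map, nhds_prod_eq, Filter.mem_prod_iff] at hU'
    obtain ⟨W1, h1, W2, h2, hW⟩ := hU'
    obtain ⟨n₁, -, hn₁⟩ := (Filter.frequently_atTop.mp (hfreq (W1 ∩ W2) (Filter.inter_mem h1 h2))) 0
    obtain ⟨n₂, hn₂ge, hn₂⟩ := (Filter.frequently_atTop.mp (hfreq (W1 ∩ W2) (Filter.inter_mem h1 h2))) (n₁ + 2)
    refine ⟨n₂ - n₁, by omega, ?_⟩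
    have hmem : ((x₀ + n₂ • s), (x₀ + n₁ • s)) ∈ W1 ×ˢ W2 := ⟨hn₂.1, hn₁.2⟩
    have hWm : (x₀ + n₂ • s) - (x₀ + n₁ • s) ∈ U := hW hmem
    have heq : (x₀ + n₂ • s) - (x₀ + n₁ • s) = (n₂ - n₁) • s := by
      have h' : n₁ • s + (n₂ - n₁) • s = n₂ • s := by
        rw [← add_nsmul]
        congr 1
        omega
      have := h'
      rw [← h']
      abel
    rwa [heq] at hWm
  -- V i + t ⊆ V i
  have htadd : ∀ i, ∀ x ∈ V i, x - s ∈ V i := by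
    intro i x hx
    have hcl : x - s ∈ closure (V i) := by
      rw [mem_closure_iff_nhds]
      intro U hU
      have hU0 : (fun y => (x - s) + y) ⁻¹' U ∈ nhds (0 : H) := by
        have hc : Continuous fun y : H => (x - s) + y := continuous_const.add continuous_id
        have := hc.tendsto 0
        apply this
        simpa using hU
      obtain ⟨k, hk2, hk⟩ := small _ hU0
      refine ⟨x + (k - 1) • s, ?_, hns i x hx (k - 1)⟩
      have : x + (k - 1) • s = (x - s) + k • s := by
        have h' : (1 : ℕ) • s + (k - 1) • s = k • s := by
          rw [← add_nsmul]; congr 1; omega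
        rw [← h']; simp; abel
      rw [this]
      exact hk
    rwa [(hcpt i).isClosed.closure_eq] at hcl
  have hVt : ∀ i, V i + ({t} : Set H) = V i := by
    intro i
    apply Set.Subset.antisymm
    · intro y hy
      have h1 : y + -t ∈ V i := by simpa [Set.mem_add] using hy
      have h2 := htadd i _ h1
      have heq : (y + -t) - s = y := by rw [hs]; abel
      rwa [heq] at h2
    · intro y hy
      have := hstep i y hy
      refine ⟨y + s, this, t, rfl, ?_⟩
      rw [hs]
      simp [add_assoc]
  have ht0 : t = 0 := hirr t hVt
  have hww : w + w' = 0 := ht0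
  have hw' : w' = -w := (neg_eq_of_add_eq_zero_right hww).symm
  refine ⟨hw', fun i => Set.Subset.antisymm (hA i) ?_⟩
  intro y hy
  have h1 : y + -w ∈ V i := by simpa [Set.mem_add] using hy
  have h2 : (y + -w) + -w' ∈ A i := by simpa [Set.mem_add] using hV i h1
  have heq : (y + -w) + -w' = y := by
    rw [hw']
    abel
  rwa [heq] at h2
end

section
/- Let H be a Hausdorff abelian topological group, V a nonempty compact subset of H, and g ∈ H. If V ⊆ V + g, then V = V + g. -/
open scoped Pointwise
open Filter Topology

/-- A nonempty compact subset of a Hausdorff abelian topological group that is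
contained in one of its translates equals that translate. -/
theorem compact_subset_translate_eq (H : Type*) [AddCommGroup H]
    [TopologicalSpace H] [IsTopologicalAddGroup H] [T2Space H]
    (V : Set H) (hne : V.Nonempty) (hcpt : IsCompact V) (g : H)
    (h : V ⊆ V + ({g} : Set H)) : V = V + ({g} : Set H) := by
  have hstep : ∀ v ∈ V, v - g ∈ V := by
    intro v hv
    obtain ⟨w, hw, x, hx, rfl⟩ := h hv
    simp only [Set.mem_singleton_iff] at hx
    subst hx
    simpa using hw
  -- key: for each v ∈ V, v + g ∈ V
  have key : ∀ v ∈ V, v + g ∈ V := by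
    intro v hv
    set a : ℕ → H := fun n => v - n • g with ha
    have haV : ∀ n, a n ∈ V := by
      intro n
      induction n with
      | zero => simpa [ha] using hv
      | succ n ih =>
          have := hstep _ ih
          simpa [ha, succ_nsmul, sub_sub] using this
    have hle : Filter.map a Filter.atTop ≤ Filter.principal V :=
      le_principal_iff.2 (Filter.mem_map.2 (Filter.Eventually.of_forall haV))
    obtain ⟨p, hpV, hp⟩ := hcpt.exists_clusterPt hle
    -- show v + g ∈ closure V
    have hclosed : IsClosed V := hcpt.isClosed
    rw [← hclosed.closure_eq]
    rw [mem_closure_iff_nhds]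
    intro N hN
    -- W = nbhd of 0 such that v+g - W ⊆ N
    have hWmem : (fun w => v + g - w) ⁻¹' N ∈ 𝓝 (0 : H) := by
      have hc : Continuous fun w : H => v + g - w := continuous_const.sub continuous_id
      have := hc.continuousAt (x := (0:H))
      apply this
      simpa using hN
    obtain ⟨U, hU, hUW⟩ := exists_nhds_half_neg hWmem
    -- p + U-like nbhd: use U' = {x | x - p ∈ U}
    have hU' : {x | x - p ∈ U} ∈ 𝓝 p := by
      have hc : Continuous fun x : H => x - p := continuous_id.sub continuous_const
      have := hc.continuousAt (x := p)
      apply this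
      simpa using hU
    have hfreq : ∃ᶠ n in Filter.atTop, a n ∈ {x | x - p ∈ U} :=
      mapClusterPt_iff_frequently.1 hp _ hU'
    obtain ⟨m, -, hm⟩ := (Filter.frequently_atTop.1 hfreq) 0
    obtain ⟨n, hmn, hn⟩ := (Filter.frequently_atTop.1 hfreq) (m + 1)
    have hk : (n - m) • g ∈ (fun w => v + g - w) ⁻¹' N := by
      have : a m - a n = (n - m) • g := by
        have hmn' : m ≤ n := by omega
        simp only [ha]
        rw [sub_nsmul g hmn']
        abel
      have := hUW _ hm _ hn
      rw [show a m - p - (a n - p) = a m - a n by abel] at this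
      rwa [‹a m - a n = (n - m) • g›] at this
    -- the witness point
    refine ⟨v + g - (n - m) • g, hk, ?_⟩
    have hpos : 1 ≤ n - m := by omega
    have : v + g - (n - m) • g = a (n - m - 1) := by
      rw [ha]
      have : n - m = (n - m - 1) + 1 := by omega
      rw [this, succ_nsmul]
      abel
    rw [this]
    exact haV _
  apply Set.Subset.antisymm h
  rintro x ⟨w, hw, y, hy, rfl⟩
  simp only [Set.mem_singleton_iff] at hy
  subst hy
  exact key w hw
end

section
/- Let X and Y be topological spaces with Y Hausdorff, let f : X → Y be a continuous open map, and let W ⊆ X be a compact set that is topologically regular, i.e. W equals the closure of its interior. Then f(W) is a compact topologically regular subset of Y, i.e. f(W) equals the closure of its interior in Y. -/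
/-- The image of a compact topologically regular set under a continuous open
map into a Hausdorff space is compact and topologically regular. -/
theorem image_compact_topologically_regular (X Y : Type*)
    [TopologicalSpace X] [TopologicalSpace Y] [T2Space Y]
    (f : X → Y) (hfc : Continuous f) (hfo : IsOpenMap f)
    (W : Set X) (hcpt : IsCompact W) (hreg : W = closure (interior W)) :
    IsCompact (f '' W) ∧ f '' W = closure (interior (f '' W)) := by
  have hcpt' : IsCompact (f '' W) := hcpt.image hfc
  refine ⟨hcpt', subset_antisymm ?_ ?_⟩
  · calc f '' W = f '' closure (interior W) := by rw [← hreg]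
      _ ⊆ closure (f '' interior W) := image_closure_subset_closure_image hfc
      _ ⊆ closure (interior (f '' W)) := closure_mono <|
          ((hfo _ isOpen_interior).subset_interior_iff).2
            (Set.image_mono (f := f) interior_subset)
  · exact closure_minimal (interior_subset) hcpt'.isClosed
end
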